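/- arXiv:2303.01182 — 2 statements merged into one kernel-verified Lean document; each statement's English description precedes it below -/
import Mathlib

section
/- Let V be a Banach space of dimension at least 𝔠 and W a closed linear subspace of V. Suppose V \ W is ℵ₀-lineable and W contains a regular basic sequence. Then for every n ∈ ℕ, V \ W is (n, 𝔠)-spaceable: for every n-dimensional subspace Z with Z \ {0} ⊆ V \ W, there is a closed subspace F of V with dim F = 𝔠, Z ⊆ F, and F ∩ W = {0}. -/
set_option maxHeartbeats 2000000
set_option synthInstance.maxHeartbeats 1000000

universe u

open Cardinal


lemma isClosed_sup_of_fin {V : Type*} [NormedAddCommGroup V] [NormedSpace ℝ V]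
    (A B : Submodule ℝ V) (hA : IsClosed (A : Set V)) [FiniteDimensional ℝ B] :
    IsClosed ((B ⊔ A : Submodule ℝ V) : Set V) := by
  haveI : IsClosed (A : Set V) := hA
  let qc : V →L[ℝ] V ⧸ A := A.mkQ.mkContinuous 1
    (fun x => by simpa using Submodule.Quotient.norm_mk_le A x)
  haveI : FiniteDimensional ℝ (B.map A.mkQ) := Module.Finite.map B A.mkQ
  have hclosedimg : IsClosed ((B.map A.mkQ : Submodule ℝ (V ⧸ A)) : Set (V ⧸ A)) :=
    Submodule.closed_of_finiteDimensional _
  have heq : ((B ⊔ A : Submodule ℝ V) : Set V) = qc ⁻¹' (B.map A.mkQ : Set (V ⧸ A)) := by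
    have h1 : Submodule.comap A.mkQ (B.map A.mkQ) = B ⊔ A := by
      rw [Submodule.comap_map_eq, Submodule.ker_mkQ]
    rw [← h1]
    rfl
  rw [heq]
  exact hclosedimg.preimage qc.continuous

lemma step_exists {V : Type*} [NormedAddCommGroup V] [NormedSpace ℝ V]
    (W₁ E : Submodule ℝ V) (hErank : ℵ₀ ≤ Module.rank ℝ E)
    (hEfin : FiniteDimensional ℝ ↥(E ⊓ W₁))
    (m : ℕ) (φ : Fin m → (V →L[ℝ] ℝ)) (N : Submodule ℝ (V ⧸ W₁))
    [FiniteDimensional ℝ N] :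
    ∃ e : V, e ∈ E ∧ (∀ i, φ i e = 0) ∧ W₁.mkQ e ∉ N := by
  classical
  let Φ : ↥E →ₗ[ℝ] (Fin m → ℝ) :=
    LinearMap.pi (fun i => ((φ i).toLinearMap).comp E.subtype)
  have h1 := Φ.lift_rank_range_add_rank_ker
  have h2 : Module.rank ℝ (LinearMap.range Φ) < ℵ₀ := Module.rank_lt_aleph0 ℝ _
  have hK : ℵ₀ ≤ Module.rank ℝ (LinearMap.ker Φ) := by
    by_contra h
    push_neg at h
    have h3 := Cardinal.add_lt_aleph0 (Cardinal.lift_lt_aleph0.2 h2) (Cardinal.lift_lt_aleph0.2 h)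
    rw [h1, Cardinal.lift_lt_aleph0] at h3
    exact absurd (hErank.trans_lt h3) (lt_irrefl _)
  by_contra hcon
  push_neg at hcon
  -- every element of ker Φ maps into N
  have hmem : ∀ x : ↥(LinearMap.ker Φ), W₁.mkQ ((x : ↥E) : V) ∈ N := by
    intro x
    have hx : ∀ i, φ i ((x : ↥E) : V) = 0 := by
      intro i
      have := x.2
      rw [LinearMap.mem_ker] at this
      have := congrFun this i
      simpa [Φ] using this
    exact hcon _ (x : ↥E).2 hx
  let θ : ↥(LinearMap.ker Φ) →ₗ[ℝ] ↥N :=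
    LinearMap.codRestrict N (W₁.mkQ ∘ₗ (E.subtype ∘ₗ (LinearMap.ker Φ).subtype)) hmem
  have h4 := θ.rank_range_add_rank_ker
  have h5 : Module.rank ℝ (LinearMap.range θ) < ℵ₀ := Module.rank_lt_aleph0 ℝ _
  -- kernel of θ embeds into E ⊓ W₁
  have hker : Function.Injective
      (LinearMap.codRestrict (E ⊓ W₁)
        (E.subtype ∘ₗ ((LinearMap.ker Φ).subtype ∘ₗ (LinearMap.ker θ).subtype))
        (by
          intro x
          have hx0 : θ (x : ↥(LinearMap.ker Φ)) = 0 := x.2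
          have hv : W₁.mkQ ((((x : ↥(LinearMap.ker Φ)) : ↥E) : V)) = 0 :=
            congrArg Subtype.val hx0
          refine Submodule.mem_inf.mpr ⟨((x : ↥(LinearMap.ker Φ)) : ↥E).2, ?_⟩
          rwa [Submodule.mkQ_apply, Submodule.Quotient.mk_eq_zero] at hv)) := by
    intro a b hab
    have h1 := congrArg Subtype.val hab
    simp only [LinearMap.codRestrict_apply, LinearMap.coe_comp, Function.comp_apply,
      Submodule.coe_subtype] at h1
    exact Subtype.ext (Subtype.ext (Subtype.ext h1))
  haveI : FiniteDimensional ℝ ↥(LinearMap.ker θ) := Module.Finite.of_injective _ hker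
  have h6 : Module.rank ℝ (LinearMap.ker θ) < ℵ₀ := by
    exact Module.rank_lt_aleph0 ℝ ↥(LinearMap.ker θ)
  have h7 := Cardinal.add_lt_aleph0 h5 h6
  rw [h4] at h7
  exact absurd (hK.trans_lt h7) (lt_irrefl _)

lemma exists_biorth {V : Type*} [NormedAddCommGroup V] [NormedSpace ℝ V]
    (W₁ E : Submodule ℝ V) (hW₁ : IsClosed (W₁ : Set V))
    (hErank : ℵ₀ ≤ Module.rank ℝ E) (hEfin : FiniteDimensional ℝ ↥(E ⊓ W₁)) :
    ∃ (g : ℕ → V) (φ : ℕ → V →L[ℝ] ℝ),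
      (∀ j, g j ∈ E) ∧ (∀ i, ∀ w ∈ W₁, φ i w = 0) ∧
      (∀ i j, φ i (g j) = if i = j then 1 else 0) := by
  classical
  haveI : IsClosed (W₁ : Set V) := hW₁
  -- the type of partial families
  let Q : ℕ → Type _ := fun m => { p : (Fin m → V) × (Fin m → (V →L[ℝ] ℝ)) //
      (∀ j, p.1 j ∈ E) ∧ (∀ i, ∀ w ∈ W₁, p.2 i w = 0) ∧
      (∀ i j, p.2 i (p.1 j) = if i = j then 1 else 0) }
  have hstep : ∀ m (p : Q m), ∃ p' : Q (m + 1),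
      ∀ i : Fin m, p'.1.1 i.castSucc = p.1.1 i ∧ p'.1.2 i.castSucc = p.1.2 i := by
    intro m p
    obtain ⟨⟨gm, φm⟩, hgE, hφW, hbi⟩ := p
    set N : Submodule ℝ (V ⧸ W₁) := Submodule.span ℝ (Set.range (fun i => W₁.mkQ (gm i))) with hN
    haveI : FiniteDimensional ℝ N := FiniteDimensional.span_of_finite ℝ (Set.finite_range _)
    obtain ⟨e, heE, hφe, hqe⟩ := step_exists W₁ E hErank hEfin m φm N
    haveI : IsClosed (N : Set (V ⧸ W₁)) := N.closed_of_finiteDimensional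
    set ξ : (V ⧸ W₁) ⧸ N := N.mkQ (W₁.mkQ e) with hξdef
    have hξ : ξ ≠ 0 := by
      rw [hξdef, Submodule.mkQ_apply, ne_eq, Submodule.Quotient.mk_eq_zero]
      exact hqe
    obtain ⟨ψ₀, hψnorm, hψξ⟩ := exists_dual_vector ℝ ξ (norm_ne_zero_iff.mpr hξ)
    let πc : (V ⧸ W₁) →L[ℝ] ((V ⧸ W₁) ⧸ N) := N.mkQ.mkContinuous 1
      (fun x => by simpa using Submodule.Quotient.norm_mk_le N x)
    let qc : V →L[ℝ] (V ⧸ W₁) := W₁.mkQ.mkContinuous 1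
      (fun x => by simpa using Submodule.Quotient.norm_mk_le W₁ x)
    let φ' : V →L[ℝ] ℝ := (‖ξ‖ : ℝ)⁻¹ • (ψ₀.comp (πc.comp qc))
    have hξnorm : ‖ξ‖ ≠ 0 := by simpa using hξ
    have hφ'e : φ' e = 1 := by
      have : πc (qc e) = ξ := rfl
      simp only [φ', ContinuousLinearMap.smul_apply, ContinuousLinearMap.comp_apply, this]
      rw [hψξ]
      field_simp
      simp [hξnorm]
    have hφ'g : ∀ i, φ' (gm i) = 0 := by
      intro i
      have h1 : qc (gm i) ∈ N := Submodule.subset_span ⟨i, rfl⟩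
      have h2 : πc (qc (gm i)) = 0 := by
        rw [show πc (qc (gm i)) = N.mkQ (qc (gm i)) from rfl, Submodule.mkQ_apply,
          Submodule.Quotient.mk_eq_zero]
        exact h1
      simp [φ', h2]
    have hφ'W : ∀ w ∈ W₁, φ' w = 0 := by
      intro w hw
      have h1 : qc w = 0 := by
        rw [show qc w = W₁.mkQ w from rfl, Submodule.mkQ_apply, Submodule.Quotient.mk_eq_zero]
        exact hw
      simp [φ', h1]
    refine ⟨⟨⟨Fin.snoc gm e, Fin.snoc φm φ'⟩, ?_, ?_, ?_⟩, fun i => ⟨by simp, by simp⟩⟩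
    · intro j
      refine Fin.lastCases ?_ ?_ j
      · simpa using heE
      · intro i; simpa using hgE i
    · intro i w hw
      refine Fin.lastCases ?_ ?_ i
      · simpa using hφ'W w hw
      · intro i; simpa using hφW i w hw
    · intro i j
      refine Fin.lastCases ?_ ?_ i
      · refine Fin.lastCases ?_ ?_ j
        · simpa using hφ'e
        · intro j
          have : (Fin.last m) ≠ j.castSucc := (Fin.castSucc_lt_last j).ne'
          simpa [this] using hφ'g j
      · intro i
        refine Fin.lastCases ?_ ?_ j
        · have : i.castSucc ≠ (Fin.last m) := (Fin.castSucc_lt_last i).ne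
          simpa [this] using hφe i
        · intro j
          have h := hbi i j
          simpa [Fin.castSucc_inj] using h
  let seq : ∀ m, Q m := fun m => Nat.rec
    ⟨(fun i => i.elim0, fun i => i.elim0), fun j => j.elim0, fun i => i.elim0, fun i => i.elim0⟩
    (fun m p => Classical.choose (hstep m p)) m
  have compat : ∀ m (i : Fin m), (seq (m + 1)).1.1 i.castSucc = (seq m).1.1 i ∧
      (seq (m + 1)).1.2 i.castSucc = (seq m).1.2 i :=
    fun m i => Classical.choose_spec (hstep m (seq m)) i
  let g : ℕ → V := fun j => (seq (j + 1)).1.1 (Fin.last j)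
  let φ : ℕ → (V →L[ℝ] ℝ) := fun j => (seq (j + 1)).1.2 (Fin.last j)
  have key : ∀ m, ∀ j : Fin m, (seq m).1.1 j = g j.val ∧ (seq m).1.2 j = φ j.val := by
    intro m
    induction m with
    | zero => exact fun j => j.elim0
    | succ m ih =>
      intro j
      refine Fin.lastCases ?_ ?_ j
      · exact ⟨rfl, rfl⟩
      · intro i
        obtain ⟨h1, h2⟩ := compat m i
        obtain ⟨h3, h4⟩ := ih i
        exact ⟨h1.trans h3, h2.trans h4⟩
  refine ⟨g, φ, ?_, ?_, ?_⟩
  · intro j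
    exact (seq (j + 1)).2.1 (Fin.last j)
  · intro i w hw
    exact (seq (i + 1)).2.2.1 (Fin.last i) w hw
  · intro i j
    have hi : i < max i j + 1 := by omega
    have hj : j < max i j + 1 := by omega
    have inv := (seq (max i j + 1)).2.2.2 ⟨i, hi⟩ ⟨j, hj⟩
    rw [(key _ ⟨i, hi⟩).2, (key _ ⟨j, hj⟩).1] at inv
    simpa [Fin.ext_iff] using inv

lemma closure_span_zero {V : Type*} [NormedAddCommGroup V] [NormedSpace ℝ V]
    (h : ℕ → V) (φ : ℕ → V →L[ℝ] ℝ)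
    (hbi : ∀ i j, φ i (h j) = if i = j then 1 else 0)
    (Cb : ℝ) (hCb : 0 ≤ Cb)
    (hbase : ∀ (s r : ℕ), s ≤ r → ∀ lam : ℕ → ℝ,
      ‖∑ k ∈ Finset.range s, lam k • h k‖ ≤ Cb * ‖∑ k ∈ Finset.range r, lam k • h k‖)
    (u : V) (hu : u ∈ closure ((Submodule.span ℝ (Set.range h) : Submodule ℝ V) : Set V))
    (hφu : ∀ j, φ j u = 0) : u = 0 := by
  classical
  set G : Submodule ℝ V := Submodule.span ℝ (Set.range h) with hG
  let P : ℕ → (V →L[ℝ] V) := fun s => ∑ j ∈ Finset.range s, (φ j).smulRight (h j)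
  have hPapp : ∀ s v, P s v = ∑ j ∈ Finset.range s, φ j v • h j := by
    intro s v
    simp [P, ContinuousLinearMap.sum_apply]
  -- representation of span elements
  have hrep : ∀ v ∈ G, ∃ (r : ℕ) (lam : ℕ → ℝ), (∀ k, r ≤ k → lam k = 0) ∧
      v = ∑ k ∈ Finset.range r, lam k • h k := by
    intro v hv
    rw [hG, Finsupp.mem_span_range_iff_exists_finsupp] at hv
    obtain ⟨c, hc⟩ := hv
    refine ⟨(c.support.sup id) + 1, c, ?_, ?_⟩
    · intro k hk
      by_contra hck
      have hks : k ∈ c.support := Finsupp.mem_support_iff.mpr hck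
      have h9 : k ≤ c.support.sup id := Finset.le_sup (f := id) hks
      omega
    · rw [← hc]
      rw [Finsupp.sum_of_support_subset c ?_ (fun i a => a • h i) (by intro i _; simp)]
      intro k hk
      rw [Finset.mem_range]
      have h9 : k ≤ c.support.sup id := Finset.le_sup (f := id) hk
      omega
  -- bound on span
  have hbound : ∀ v ∈ G, ∀ s, ‖P s v‖ ≤ Cb * ‖v‖ := by
    intro v hv s
    obtain ⟨r, lam, hlam0, hvr⟩ := hrep v hv
    have hφv : ∀ j, φ j v = lam j := by
      intro j
      rw [hvr, map_sum]
      simp only [map_smul, hbi, smul_eq_mul, mul_ite, mul_one, mul_zero]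
      rw [Finset.sum_ite_eq (Finset.range r) j lam]
      by_cases hjr : j ∈ Finset.range r
      · simp [hjr]
      · simp only [hjr, if_false]
        rw [Finset.mem_range, not_lt] at hjr
        exact (hlam0 j hjr).symm
    have hPv : P s v = ∑ j ∈ Finset.range s, lam j • h j := by
      rw [hPapp]
      exact Finset.sum_congr rfl fun j _ => by rw [hφv]
    have hvext : v = ∑ k ∈ Finset.range (max s r), lam k • h k := by
      rw [hvr]
      refine Finset.sum_subset (Finset.range_subset_range.mpr (le_max_right s r)) ?_
      intro k hk1 hk2
      rw [Finset.mem_range, not_lt] at hk2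
      rw [hlam0 k hk2, zero_smul]
    calc ‖P s v‖ = ‖∑ j ∈ Finset.range s, lam j • h j‖ := by rw [hPv]
      _ ≤ Cb * ‖∑ k ∈ Finset.range (max s r), lam k • h k‖ :=
          hbase s (max s r) (le_max_left s r) lam
      _ = Cb * ‖v‖ := by rw [← hvext]
  -- bound extends to closure
  have hboundc : ∀ v ∈ closure (G : Set V), ∀ s, ‖P s v‖ ≤ Cb * ‖v‖ := by
    intro v hv s
    have hcl : IsClosed {w : V | ‖P s w‖ ≤ Cb * ‖w‖} :=
      isClosed_le (continuous_norm.comp (P s).continuous) (continuous_const.mul continuous_norm)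
    exact closure_minimal (fun w hw => hbound w hw s) hcl hv
  -- P s u = 0
  have hPu : ∀ s, P s u = 0 := by
    intro s
    rw [hPapp]
    simp [hφu]
  -- epsilon argument
  have hnorm : ∀ ε : ℝ, 0 < ε → ‖u‖ ≤ (1 + Cb) * ε := by
    intro ε hε
    obtain ⟨w, hwG, hwu⟩ := Metric.mem_closure_iff.mp hu ε hε
    obtain ⟨r, lam, hlam0, hwr⟩ := hrep w hwG
    have hPw : P r w = w := by
      rw [hPapp _ w]
      have hφw : ∀ j, φ j w = lam j := by
        intro j
        rw [hwr, map_sum]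
        simp only [map_smul, hbi, smul_eq_mul, mul_ite, mul_one, mul_zero]
        rw [Finset.sum_ite_eq (Finset.range r) j lam]
        by_cases hjr : j ∈ Finset.range r
        · simp [hjr]
        · simp only [hjr, if_false]
          rw [Finset.mem_range, not_lt] at hjr
          exact (hlam0 j hjr).symm
      have hcongr : ∑ j ∈ Finset.range r, φ j w • h j = ∑ j ∈ Finset.range r, lam j • h j :=
        Finset.sum_congr rfl fun j _ => by rw [hφw j]
      rw [hcongr, ← hwr]
    have hwuG : w - u ∈ closure (G : Set V) := by
      have hset : closure ((G : Submodule ℝ V) : Set V) = (G.topologicalClosure : Set V) :=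
        (Submodule.topologicalClosure_coe G).symm
      have h2 : u ∈ G.topologicalClosure := by rw [hset] at hu; exact hu
      have h3 : w ∈ G.topologicalClosure := G.le_topologicalClosure hwG
      have h4 : w - u ∈ G.topologicalClosure := sub_mem h3 h2
      rw [hset]
      exact h4
    have hb := hboundc (w - u) hwuG r
    have hPwu : P r (w - u) = w := by rw [map_sub, hPw, hPu, sub_zero]
    rw [hPwu] at hb
    have hdist : ‖w - u‖ < ε := by
      rw [← dist_eq_norm, dist_comm]
      exact hwu
    have h5 : ‖u‖ ≤ ‖w - u‖ + ‖w‖ := by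
      calc ‖u‖ = ‖(u - w) + w‖ := by rw [sub_add_cancel]
        _ ≤ ‖u - w‖ + ‖w‖ := norm_add_le _ _
        _ = ‖w - u‖ + ‖w‖ := by rw [norm_sub_rev]
    nlinarith [hb, hdist, hCb, norm_nonneg (w - u)]
  have hfin : ‖u‖ ≤ 0 := by
    by_contra hn
    push_neg at hn
    have h6 := hnorm (‖u‖ / (2 * (1 + Cb))) (by positivity)
    have h7 : (1 + Cb) * (‖u‖ / (2 * (1 + Cb))) = ‖u‖ / 2 := by
      field_simp
    rw [h7] at h6
    linarith
  simpa [norm_le_zero_iff] using hfin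

lemma perturbed_basic {V : Type*} [NormedAddCommGroup V] [NormedSpace ℝ V]
    (y d : ℕ → V) (C L : ℝ) (hC1 : 1 ≤ C) (hL : 0 < L)
    (hbasicy : ∀ s r, s ≤ r → ∀ lam : ℕ → ℝ,
      ‖∑ k ∈ Finset.range s, lam k • y k‖ ≤ C * ‖∑ k ∈ Finset.range r, lam k • y k‖)
    (hyL : ∀ k, L ≤ ‖y k‖)
    (hd : ∀ k, ‖d k‖ ≤ (L / (2 * C)) * (1 / 2) ^ (k + 2)) :
    ∀ s r, s ≤ r → ∀ lam : ℕ → ℝ,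
      ‖∑ k ∈ Finset.range s, lam k • (y k + d k)‖ ≤
        (2 * C + 1) * ‖∑ k ∈ Finset.range r, lam k • (y k + d k)‖ := by
  intro s r hsr lam
  have hC0 : (0:ℝ) < C := lt_of_lt_of_le one_pos hC1
  set S : ℕ → V := fun t => ∑ k ∈ Finset.range t, lam k • y k with hS
  set H : ℕ → V := fun t => ∑ k ∈ Finset.range t, lam k • (y k + d k) with hH
  have hHS : ∀ t, H t = S t + ∑ k ∈ Finset.range t, lam k • d k := by
    intro t
    rw [hH, hS]
    simp only [smul_add]
    rw [Finset.sum_add_distrib]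
  -- coefficient bound
  have hcoef : ∀ k, k < r → |lam k| ≤ (2 * C / L) * ‖S r‖ := by
    intro k hk
    have h1 : S (k + 1) - S k = lam k • y k := by
      rw [hS]
      simp [Finset.sum_range_succ]
    have h2 : ‖S (k + 1)‖ ≤ C * ‖S r‖ := hbasicy (k + 1) r (by omega) lam
    have h3 : ‖S k‖ ≤ C * ‖S r‖ := hbasicy k r (by omega) lam
    have h4 : ‖lam k • y k‖ ≤ 2 * C * ‖S r‖ := by
      rw [← h1]
      calc ‖S (k + 1) - S k‖ ≤ ‖S (k + 1)‖ + ‖S k‖ := norm_sub_le _ _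
        _ ≤ 2 * C * ‖S r‖ := by linarith
    have h5 : |lam k| * L ≤ |lam k| * ‖y k‖ := by
      exact mul_le_mul_of_nonneg_left (hyL k) (abs_nonneg _)
    rw [norm_smul, Real.norm_eq_abs] at h4
    rw [div_mul_eq_mul_div, le_div_iff₀ hL]
    calc |lam k| * L ≤ |lam k| * ‖y k‖ := h5
      _ ≤ 2 * C * ‖S r‖ := h4
      _ = 2 * C * ‖S r‖ := rfl
  -- perturbation sum bound
  have hD : ∀ t, t ≤ r → ‖∑ k ∈ Finset.range t, lam k • d k‖ ≤ ‖S r‖ / 2 := by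
    intro t ht
    have h1 : ‖∑ k ∈ Finset.range t, lam k • d k‖ ≤
        ∑ k ∈ Finset.range t, ‖S r‖ * (1 / 2) ^ (k + 2) := by
      refine (norm_sum_le _ _).trans (Finset.sum_le_sum ?_)
      intro k hk
      rw [Finset.mem_range] at hk
      rw [norm_smul, Real.norm_eq_abs]
      calc |lam k| * ‖d k‖ ≤ ((2 * C / L) * ‖S r‖) * ((L / (2 * C)) * (1 / 2) ^ (k + 2)) := by
            refine mul_le_mul (hcoef k (by omega)) (hd k) (norm_nonneg _) ?_
            positivity
        _ = ‖S r‖ * (1 / 2) ^ (k + 2) := by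
            field_simp
    refine h1.trans ?_
    have h2 : ∑ k ∈ Finset.range t, ‖S r‖ * (1 / 2) ^ (k + 2) =
        ‖S r‖ * ((1/4) * ∑ k ∈ Finset.range t, (1 / 2 : ℝ) ^ k) := by
      rw [Finset.mul_sum]
      rw [Finset.mul_sum]
      refine Finset.sum_congr rfl fun k _ => ?_
      ring
    rw [h2]
    have h3 : ∑ k ∈ Finset.range t, (1 / 2 : ℝ) ^ k ≤ 2 := sum_geometric_two_le t
    have h4 : (0:ℝ) ≤ ‖S r‖ := norm_nonneg _
    nlinarith
  -- ‖S r‖ ≤ 2 ‖H r‖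
  have hSr : ‖S r‖ ≤ 2 * ‖H r‖ := by
    have h1 : ‖S r‖ ≤ ‖H r‖ + ‖S r‖ / 2 := by
      have h2 : S r = H r - ∑ k ∈ Finset.range r, lam k • d k := by
        rw [hHS r]; abel
      calc ‖S r‖ = ‖H r - ∑ k ∈ Finset.range r, lam k • d k‖ := by rw [← h2]
        _ ≤ ‖H r‖ + ‖∑ k ∈ Finset.range r, lam k • d k‖ := norm_sub_le _ _
        _ ≤ ‖H r‖ + ‖S r‖ / 2 := by linarith [hD r le_rfl]
    linarith
  -- final
  have h1 : ‖H s‖ ≤ ‖S s‖ + ‖∑ k ∈ Finset.range s, lam k • d k‖ := by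
    rw [hHS s]
    exact norm_add_le _ _
  have h2 : ‖S s‖ ≤ C * ‖S r‖ := hbasicy s r hsr lam
  have h3 := hD s hsr
  have h4 : (0:ℝ) ≤ ‖H r‖ := norm_nonneg _
  calc ‖H s‖ ≤ C * ‖S r‖ + ‖S r‖ / 2 := by linarith
    _ ≤ (C + 1/2) * (2 * ‖H r‖) := by nlinarith
    _ = (2 * C + 1) * ‖H r‖ := by ring

lemma mk_le_continuum_of_sep {V : Type u} [NormedAddCommGroup V] {s : Set V}
    (hs : TopologicalSpace.IsSeparable s) : #s ≤ Cardinal.continuum := by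
  classical
  obtain ⟨c, hccount, hsub⟩ := hs
  have hex : ∀ (x : ↥s) (n : ULift.{u} ℕ), ∃ d : ↥c, dist (x : V) (d : V) < 1 / (n.down + 1) := by
    intro x n
    have hx : (x : V) ∈ closure c := hsub x.2
    obtain ⟨d, hd, hdist⟩ := Metric.mem_closure_iff.mp hx (1 / (n.down + 1)) (by positivity)
    exact ⟨⟨d, hd⟩, hdist⟩
  choose f hf using hex
  have hinj : Function.Injective f := by
    intro x y hxy
    have hdist : ∀ n : ℕ, dist (x : V) (y : V) ≤ 2 / (n + 1) := by
      intro n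
      have h1 := hf x ⟨n⟩
      have h2 := hf y ⟨n⟩
      rw [hxy] at h1
      calc dist (x : V) (y : V) ≤ dist (x : V) (f y ⟨n⟩ : V) + dist (f y ⟨n⟩ : V) (y : V) :=
            dist_triangle _ _ _
        _ ≤ 1 / (n + 1) + 1 / (n + 1) := by
            rw [dist_comm (f y ⟨n⟩ : V)]
            exact add_le_add h1.le h2.le
        _ = 2 / (n + 1) := by ring
    have h0 : dist (x : V) (y : V) ≤ 0 := by
      refine le_of_forall_pos_le_add ?_
      intro ε hε
      obtain ⟨n, hn⟩ := exists_nat_ge (2 / ε)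
      have hpos : (0:ℝ) < n + 1 := by positivity
      have : 2 / ((n:ℝ) + 1) ≤ ε := by
        rw [div_le_iff₀ hpos]
        have h2 : 2 / ε ≤ (n:ℝ) := hn
        rw [div_le_iff₀ hε] at h2
        nlinarith
      linarith [hdist n]
    exact Subtype.ext (dist_eq_zero.mp (le_antisymm h0 dist_nonneg))
  calc #s ≤ #(ULift.{u} ℕ → ↥c) := Cardinal.mk_le_of_injective hinj
    _ = #(↥c) ^ #(ULift.{u} ℕ) := (Cardinal.power_def _ _).symm
    _ ≤ ℵ₀ ^ (ℵ₀ : Cardinal.{u}) := by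
        have h1 : #(↥c) ≤ ℵ₀ := by
          haveI := hccount.to_subtype
          exact Cardinal.mk_le_aleph0
        have h2 : #(ULift.{u} ℕ) = ℵ₀ := by
          rw [Cardinal.mk_uLift, Cardinal.mk_nat, Cardinal.lift_aleph0]
        rw [h2]
        exact Cardinal.power_le_power_right h1
    _ = Cardinal.continuum := Cardinal.aleph0_power_aleph0

lemma continuum_le_rank_of_family {V : Type u} [NormedAddCommGroup V] [NormedSpace ℝ V]
    [CompleteSpace V]
    (h : ℕ → V) (φ : ℕ → V →L[ℝ] ℝ)
    (hbi : ∀ i j, φ i (h j) = if i = j then 1 else 0)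
    (F : Submodule ℝ V) (hcl : IsClosed (F : Set V)) (hsub : ∀ j, h j ∈ F) :
    Cardinal.continuum ≤ Module.rank ℝ F := by
  classical
  set c : ℝ → ℕ → ℝ := fun t j => t ^ j * ((2:ℝ) ^ j * (1 + ‖h j‖))⁻¹ with hc
  have hsummable : ∀ t : ℝ, t ∈ Set.Ioo (0:ℝ) 1 → Summable (fun j => c t j • h j) := by
    intro t ht
    refine Summable.of_norm_bounded summable_geometric_two ?_
    intro j
    rw [norm_smul, Real.norm_eq_abs, hc]
    have h1 : (0:ℝ) < 1 + ‖h j‖ := by positivity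
    have ht0 : (0:ℝ) ≤ t := ht.1.le
    have h2 : |t ^ j * ((2:ℝ) ^ j * (1 + ‖h j‖))⁻¹| = t ^ j * ((2:ℝ) ^ j * (1 + ‖h j‖))⁻¹ := by
      rw [abs_of_nonneg (mul_nonneg (pow_nonneg ht0 j) (by positivity))]
    rw [h2]
    have h3 : ‖h j‖ ≤ 1 + ‖h j‖ := by linarith
    have h4 : t ^ j ≤ 1 := pow_le_one₀ ht.1.le ht.2.le
    calc t ^ j * ((2:ℝ) ^ j * (1 + ‖h j‖))⁻¹ * ‖h j‖
        ≤ 1 * ((2:ℝ) ^ j * (1 + ‖h j‖))⁻¹ * (1 + ‖h j‖) := by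
          refine mul_le_mul (mul_le_mul h4 le_rfl (by positivity) one_pos.le) h3
            (norm_nonneg _) (by positivity)
      _ = ((2:ℝ) ^ j)⁻¹ := by
          field_simp
      _ = (1/2:ℝ) ^ j := by
          rw [one_div, inv_pow]
  set v : ℝ → V := fun t => ∑' j, c t j • h j with hv
  have hvF : ∀ t ∈ Set.Ioo (0:ℝ) 1, v t ∈ F := by
    intro t ht
    have h1 := (hsummable t ht).hasSum
    have h2 := h1.tendsto_sum_nat
    refine hcl.mem_of_tendsto h2 ?_
    filter_upwards with n
    exact Submodule.sum_mem F fun j _ => Submodule.smul_mem F _ (hsub j)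
  have hφv : ∀ (i : ℕ) (t : ℝ), t ∈ Set.Ioo (0:ℝ) 1 → φ i (v t) = c t i := by
    intro i t ht
    rw [hv]
    rw [ContinuousLinearMap.map_tsum _ (hsummable t ht)]
    have h1 : ∀ j, φ i (c t j • h j) = if j = i then c t i else 0 := by
      intro j
      rw [map_smul, hbi]
      by_cases hji : i = j
      · subst hji; simp
      · simp [hji, Ne.symm hji]
    calc ∑' j, φ i (c t j • h j) = ∑' j, if j = i then c t i else 0 := by
          exact tsum_congr h1
      _ = c t i := tsum_ite_eq i (fun _ => c t i)
  -- linear independence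
  have hli : LinearIndependent ℝ (fun t : ↥(Set.Ioo (0:ℝ) 1) => v (t : ℝ)) := by
    rw [linearIndependent_iff']
    intro s g hg t₀ ht₀
    -- moments vanish
    have hmomj : ∀ j : ℕ, ∑ t ∈ s, g t * (t : ℝ) ^ j = 0 := by
      intro j
      have h1 := congrArg (φ j) hg
      rw [map_sum, map_zero] at h1
      have h2 : ∑ t ∈ s, g t * c (t : ℝ) j = 0 := by
        calc ∑ t ∈ s, g t * c (t : ℝ) j = ∑ t ∈ s, φ j (g t • v (t : ℝ)) := by
              refine Finset.sum_congr rfl fun t _ => ?_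
              rw [map_smul, hφv j (t : ℝ) t.2, smul_eq_mul]
          _ = 0 := h1
      have h3 : ∑ t ∈ s, g t * c (t : ℝ) j =
          (((2:ℝ) ^ j * (1 + ‖h j‖))⁻¹) * ∑ t ∈ s, g t * (t : ℝ) ^ j := by
        rw [Finset.mul_sum]
        refine Finset.sum_congr rfl fun t _ => ?_
        rw [hc]
        ring
      rw [h3] at h2
      have h4 : ((2:ℝ) ^ j * (1 + ‖h j‖))⁻¹ ≠ 0 := by positivity
      exact (mul_eq_zero.mp h2).resolve_left h4
    have hmom : ∀ p : Polynomial ℝ, ∑ t ∈ s, g t * p.eval (t : ℝ) = 0 := by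
      intro p
      have h1 : ∀ t : ↥(Set.Ioo (0:ℝ) 1), p.eval (t : ℝ) =
          ∑ j ∈ Finset.range (p.natDegree + 1), p.coeff j * (t : ℝ) ^ j := by
        intro t
        exact Polynomial.eval_eq_sum_range ((t : ℝ))
      calc ∑ t ∈ s, g t * p.eval (t : ℝ)
          = ∑ t ∈ s, ∑ j ∈ Finset.range (p.natDegree + 1), g t * (p.coeff j * (t : ℝ) ^ j) := by
            refine Finset.sum_congr rfl fun t _ => ?_
            rw [h1 t, Finset.mul_sum]
        _ = ∑ j ∈ Finset.range (p.natDegree + 1), p.coeff j * ∑ t ∈ s, g t * (t : ℝ) ^ j := by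
            rw [Finset.sum_comm]
            refine Finset.sum_congr rfl fun j _ => ?_
            rw [Finset.mul_sum]
            refine Finset.sum_congr rfl fun t _ => ?_
            ring
        _ = 0 := by
            refine Finset.sum_eq_zero fun j _ => ?_
            rw [hmomj j, mul_zero]
    -- Lagrange basis polynomial
    have hinj : Set.InjOn (fun t : ↥(Set.Ioo (0:ℝ) 1) => (t : ℝ)) s := by
      intro a _ b _ hab
      exact Subtype.ext hab
    have hlag := hmom (Lagrange.basis s (fun t : ↥(Set.Ioo (0:ℝ) 1) => (t : ℝ)) t₀)
    rw [Finset.sum_eq_single t₀ ?_ ?_] at hlag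
    · rwa [Lagrange.eval_basis_self hinj ht₀, mul_one] at hlag
    · intro t ht htne
      rw [Lagrange.eval_basis_of_ne (Ne.symm htne) ht, mul_zero]
    · intro habs
      exact absurd ht₀ habs
  -- conclude
  let vF : ULift.{u} ↥(Set.Ioo (0:ℝ) 1) → ↥F := fun t => ⟨v (t.down : ℝ), hvF _ t.down.2⟩
  have hliF : LinearIndependent ℝ vF := by
    have hcomp : LinearIndependent ℝ
        (fun t : ULift.{u} ↥(Set.Ioo (0:ℝ) 1) => v ((t.down : ℝ))) :=
      hli.comp ULift.down ULift.down_injective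
    exact LinearIndependent.of_comp F.subtype hcomp
  have hcard := hliF.cardinal_le_rank
  rwa [Cardinal.mk_uLift, Cardinal.mk_Ioo_real (by norm_num : (0:ℝ) < 1),
    Cardinal.lift_continuum] at hcard

/-- `u` is a basic sequence: all `u k` are nonzero and there is a constant `C` with
`‖∑_{k<s} λ k • u k‖ ≤ C * ‖∑_{k<r} λ k • u k‖` for `s ≤ r`. -/
def IsBasicSeq {V : Type*} [NormedAddCommGroup V] [NormedSpace ℝ V] (u : ℕ → V) : Prop :=
  (∀ k, u k ≠ 0) ∧ ∃ C : ℝ, ∀ s r : ℕ, s ≤ r → ∀ lam : ℕ → ℝ,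
    ‖∑ k ∈ Finset.range s, lam k • u k‖ ≤ C * ‖∑ k ∈ Finset.range r, lam k • u k‖

/-- Theorem 3.6: if `dim V ≥ 𝔠`, `W` is closed, `V \ W` is `ℵ₀`-lineable
and `W` contains a regular basic sequence, then `V \ W` is `(n, 𝔠)`-spaceable for every
`n ∈ ℕ`. -/
theorem stmt6 (V : Type*) [NormedAddCommGroup V] [NormedSpace ℝ V] [CompleteSpace V]
    (hdim : Cardinal.continuum ≤ Module.rank ℝ V)
    (W : Submodule ℝ V) (hWclosed : IsClosed (W : Set V))
    (hlin : ∃ E : Submodule ℝ V, Module.rank ℝ E = Cardinal.aleph0 ∧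
      (E : Set V) ⊆ (W : Set V)ᶜ ∪ {0})
    (hbasic : ∃ y : ℕ → V, (∀ k, y k ∈ W) ∧ IsBasicSeq y ∧ ∃ L > 0, ∀ k, L ≤ ‖y k‖)
    (n : ℕ) (Z : Submodule ℝ V) (hZdim : Module.rank ℝ Z = n)
    (hZ : (Z : Set V) \ {0} ⊆ (W : Set V)ᶜ) :
    ∃ F : Submodule ℝ V, IsClosed (F : Set V) ∧ Module.rank ℝ F = Cardinal.continuum ∧
      Z ≤ F ∧ F ⊓ W = ⊥ := by
  classical
  obtain ⟨E, hErank, hEsub⟩ := hlin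
  obtain ⟨y, hyW, ⟨hynz, C, hbC⟩, L, hL, hyL⟩ := hbasic
  -- membership facts
  have hEW : ∀ e ∈ E, e ∈ W → e = 0 := by
    intro e heE heW
    rcases hEsub heE with h | h
    · exact absurd heW h
    · exact h
  have hZW : ∀ z ∈ Z, z ∈ W → z = 0 := by
    intro z hzZ hzW
    by_contra hz0
    exact hZ ⟨hzZ, hz0⟩ hzW
  haveI hZfin : FiniteDimensional ℝ Z :=
    Module.rank_lt_aleph0_iff.mp (by rw [hZdim]; exact Cardinal.nat_lt_aleph0 n)
  -- the enlarged subspace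
  set W₁ : Submodule ℝ V := Z ⊔ W with hW₁def
  have hW₁closed : IsClosed (W₁ : Set V) := isClosed_sup_of_fin W Z hWclosed
  have hWle : W ≤ W₁ := le_sup_right
  have hZle : Z ≤ W₁ := le_sup_left
  -- E ⊓ W₁ is finite dimensional
  haveI hEfin : FiniteDimensional ℝ ↥(E ⊓ W₁) := by
    haveI : Module.Finite ℝ (Z.map W.mkQ) := Module.Finite.map Z W.mkQ
    have hmem : ∀ x : V, x ∈ E ⊓ W₁ → W.mkQ x ∈ Z.map W.mkQ := by
      intro x hx
      obtain ⟨z, hz, w, hw, hzw⟩ := Submodule.mem_sup.mp hx.2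
      have : W.mkQ x = W.mkQ z := by
        rw [← hzw, map_add]
        have : W.mkQ w = 0 := by
          rw [Submodule.mkQ_apply, Submodule.Quotient.mk_eq_zero]
          exact hw
        rw [this, add_zero]
      rw [this]
      exact Submodule.mem_map_of_mem hz
    let ψ : ↥(E ⊓ W₁) →ₗ[ℝ] ↥(Z.map W.mkQ) :=
      LinearMap.codRestrict (Z.map W.mkQ) (W.mkQ ∘ₗ (E ⊓ W₁).subtype)
        (fun x => hmem x.1 x.2)
    have hinj : Function.Injective ψ := by
      intro a b hab
      have h1 : W.mkQ (a : V) = W.mkQ (b : V) := congrArg Subtype.val hab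
      have h2 : (a : V) - (b : V) ∈ W := by
        rw [← Submodule.Quotient.mk_eq_zero, ← Submodule.mkQ_apply, map_sub, h1, sub_self]
      have h3 : (a : V) - (b : V) ∈ E := sub_mem a.2.1 b.2.1
      have h4 := hEW _ h3 h2
      exact Subtype.ext (by rwa [sub_eq_zero] at h4)
    exact Module.Finite.of_injective ψ hinj
  -- biorthogonal system
  obtain ⟨g, φ, hgE, hφW₁, hbiorth⟩ := exists_biorth W₁ E hW₁closed hErank.symm.le hEfin
  -- perturbation
  set C' : ℝ := max C 1 with hC'def
  have hC'1 : (1:ℝ) ≤ C' := le_max_right C 1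
  have hC'0 : (0:ℝ) < C' := lt_of_lt_of_le one_pos hC'1
  have hbC' : ∀ s r, s ≤ r → ∀ lam : ℕ → ℝ,
      ‖∑ k ∈ Finset.range s, lam k • y k‖ ≤ C' * ‖∑ k ∈ Finset.range r, lam k • y k‖ := by
    intro s r hsr lam
    refine (hbC s r hsr lam).trans ?_
    exact mul_le_mul_of_nonneg_right (le_max_left C 1) (norm_nonneg _)
  set ε : ℕ → ℝ := fun j => (L / (2 * C')) * (1 / 2) ^ (j + 2) / (1 + ‖g j‖) with hεdef
  have hεpos : ∀ j, 0 < ε j := by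
    intro j
    have : (0:ℝ) < 1 + ‖g j‖ := by positivity
    rw [hεdef]
    positivity
  set d : ℕ → V := fun j => ε j • g j with hddef
  have hd : ∀ k, ‖d k‖ ≤ (L / (2 * C')) * (1 / 2) ^ (k + 2) := by
    intro k
    rw [hddef]
    simp only
    rw [norm_smul, Real.norm_eq_abs, abs_of_pos (hεpos k), hεdef]
    have h1 : (0:ℝ) < 1 + ‖g k‖ := by positivity
    have hA : (0:ℝ) ≤ (L / (2 * C')) * (1 / 2) ^ (k + 2) := by positivity
    rw [div_mul_eq_mul_div, div_le_iff₀ h1]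
    nlinarith [norm_nonneg (g k)]
  set h : ℕ → V := fun j => y j + d j with hhdef
  have hbasich := perturbed_basic y d C' L hC'1 hL hbC' hyL hd
  set Cb : ℝ := 2 * C' + 1 with hCbdef
  have hCb0 : (0:ℝ) ≤ Cb := by rw [hCbdef]; linarith
  -- rescaled functionals
  set φ' : ℕ → (V →L[ℝ] ℝ) := fun j => (ε j)⁻¹ • φ j with hφ'def
  have hφ'W₁ : ∀ i, ∀ w ∈ W₁, φ' i w = 0 := by
    intro i w hw
    rw [hφ'def]
    simp [hφW₁ i w hw]
  have hbiorth' : ∀ i j, φ' i (h j) = if i = j then 1 else 0 := by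
    intro i j
    rw [hφ'def, hhdef]
    simp only [ContinuousLinearMap.smul_apply, smul_eq_mul]
    rw [map_add, hφW₁ i (y j) (hWle (hyW j)), zero_add, hddef]
    simp only [map_smul, smul_eq_mul, hbiorth i j]
    by_cases hij : i = j
    · subst hij
      rw [if_pos rfl, mul_one, inv_mul_cancel₀ (hεpos i).ne']
    · rw [if_neg hij, mul_zero, mul_zero]
  -- the subspaces
  set G : Submodule ℝ V := (Submodule.span ℝ (Set.range h)).topologicalClosure with hGdef
  have hGclosed : IsClosed (G : Set V) := Submodule.isClosed_topologicalClosure _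
  have hGW₁ : ∀ u ∈ G, u ∈ W₁ → u = 0 := by
    intro u huG huW₁
    refine closure_span_zero h φ' hbiorth' Cb hCb0 ?_ u ?_ ?_
    · intro s r hsr lam
      have := hbasich s r hsr lam
      rw [hhdef]
      exact this
    · rw [hGdef, ← Submodule.topologicalClosure_coe] at *
      exact huG
    · intro j
      exact hφ'W₁ j u huW₁
  set F : Submodule ℝ V := (Z ⊔ Submodule.span ℝ (Set.range h)).topologicalClosure with hFdef
  have hFclosed : IsClosed (F : Set V) := Submodule.isClosed_topologicalClosure _
  have hZF : Z ≤ F := le_trans le_sup_left (Submodule.le_topologicalClosure _)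
  have hFle : F ≤ Z ⊔ G := by
    refine Submodule.topologicalClosure_minimal _ ?_ (isClosed_sup_of_fin G Z hGclosed)
    exact sup_le_sup_left (Submodule.le_topologicalClosure _) Z
  have hFW : F ⊓ W = ⊥ := by
    rw [eq_bot_iff]
    intro x hx
    obtain ⟨hxF, hxW⟩ := Submodule.mem_inf.mp hx
    obtain ⟨z, hz, u, hu, hzu⟩ := Submodule.mem_sup.mp (hFle hxF)
    have huW₁ : u ∈ W₁ := by
      have h1 : x ∈ W₁ := hWle hxW
      have h2 : z ∈ W₁ := hZle hz
      have : u = x - z := by rw [← hzu]; abel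
      rw [this]
      exact sub_mem h1 h2
    have hu0 : u = 0 := hGW₁ u hu huW₁
    have hxz : x = z := by rw [← hzu, hu0, add_zero]
    have : x = 0 := hZW x (hxz ▸ hz) hxW
    simpa using this
  -- rank computation
  have hsubF : ∀ j, h j ∈ F := by
    intro j
    refine Submodule.le_topologicalClosure _ ?_
    exact Submodule.mem_sup_right (Submodule.subset_span ⟨j, rfl⟩)
  have hrank_ge : Cardinal.continuum ≤ Module.rank ℝ F :=
    continuum_le_rank_of_family h φ' hbiorth' F hFclosed hsubF
  have hrank_le : Module.rank ℝ F ≤ Cardinal.continuum := by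
    obtain ⟨S, hSspan⟩ := Module.Finite.iff_fg.mp hZfin
    have hsep : TopologicalSpace.IsSeparable (F : Set V) := by
      have h1 : Z ⊔ Submodule.span ℝ (Set.range h) =
          Submodule.span ℝ ((S : Set V) ∪ Set.range h) := by
        rw [Submodule.span_union, hSspan]
      have h2 : TopologicalSpace.IsSeparable
          ((Submodule.span ℝ ((S : Set V) ∪ Set.range h) : Submodule ℝ V) : Set V) :=
        ((S.countable_toSet.union (Set.countable_range h)).isSeparable).span
      rw [hFdef, Submodule.topologicalClosure_coe, h1]
      exact h2.closure
    exact (rank_le_card ℝ ↥F).trans (mk_le_continuum_of_sep hsep)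
  exact ⟨F, hFclosed, le_antisymm hrank_le hrank_ge, hZF, hFW⟩
end

section
/- Let V be a Banach space with dim V ≥ 𝔠 and W a closed subspace containing a regular basic sequence. If V \ W is 𝔠-lineable, then V \ W is pointwise 𝔠-spaceable: for every x ∈ V \ W there is a closed subspace F of V of dimension 𝔠 with x ∈ F and F ∩ W = {0}. -/
open Cardinal Set

section Aux
variable {V : Type*} [NormedAddCommGroup V] [NormedSpace ℝ V]

lemma aux_hb (M : Submodule ℝ V) (hM : IsClosed (M : Set V)) {b : V} (hb : b ∉ M) :
    ∃ χ : V →L[ℝ] ℝ, χ b = 1 ∧ ∀ w ∈ M, χ w = 0 := by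
  obtain ⟨f, u, hfs, huf⟩ := geometric_hahn_banach_closed_point M.convex hM hb
  have hu0 : 0 < u := by simpa using hfs 0 M.zero_mem
  have hfM : ∀ w ∈ M, f w = 0 := by
    intro w hw
    by_contra h
    have h1 := hfs ((u / f w) • w) (M.smul_mem _ hw)
    rw [map_smul, smul_eq_mul, div_mul_cancel₀ _ h] at h1
    exact lt_irrefl _ h1
  have hfb : f b ≠ 0 := ne_of_gt (hu0.trans huf)
  refine ⟨(f b)⁻¹ • f, ?_, fun w hw => ?_⟩
  · simp [inv_mul_cancel₀ hfb]
  · simp [hfM w hw]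

lemma aux_closed_sup (W U : Submodule ℝ V) (hW : IsClosed (W : Set V))
    [FiniteDimensional ℝ U] : IsClosed ((W ⊔ U : Submodule ℝ V) : Set V) := by
  letI : NormedAddCommGroup (V ⧸ W) := Submodule.Quotient.normedAddCommGroup (hS := hW)
  have hcont : Continuous (W.mkQ) :=
    AddMonoidHomClass.continuous_of_bound W.mkQ 1
      (fun v => by simpa using Submodule.Quotient.norm_mk_le W v)
  have hclosed : IsClosed ((U.map W.mkQ : Submodule ℝ (V ⧸ W)) : Set (V ⧸ W)) :=
    Submodule.closed_of_finiteDimensional _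
  have heq : W ⊔ U = Submodule.comap W.mkQ (U.map W.mkQ) := by
    rw [Submodule.comap_map_eq, Submodule.ker_mkQ, sup_comm]
  rw [heq, Submodule.comap_coe]
  exact hclosed.preimage hcont

lemma aux_rank_inf_ker (E : Submodule ℝ V)
    (hE : Cardinal.continuum ≤ Module.rank ℝ E) (φ : V →L[ℝ] ℝ) :
    Cardinal.continuum ≤ Module.rank ℝ (E ⊓ LinearMap.ker φ.toLinearMap : Submodule ℝ V) := by
  by_cases hle : E ≤ LinearMap.ker φ.toLinearMap
  · rwa [inf_eq_left.mpr hle]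
  · obtain ⟨e₀, he₀E, he₀⟩ := SetLike.not_le_iff_exists.mp hle
    have he₀' : φ e₀ ≠ 0 := by simpa using he₀
    have hsub : E ≤ (E ⊓ LinearMap.ker φ.toLinearMap) ⊔ Submodule.span ℝ {e₀} := by
      intro e heE
      have h1 : e - (φ e / φ e₀) • e₀ ∈ E ⊓ LinearMap.ker φ.toLinearMap := by
        refine ⟨E.sub_mem heE (E.smul_mem _ he₀E), ?_⟩
        simp [LinearMap.mem_ker, div_mul_cancel₀ _ he₀']
      have h2 : e = (e - (φ e / φ e₀) • e₀) + (φ e / φ e₀) • e₀ := by abel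
      rw [h2]
      exact Submodule.add_mem _ (Submodule.mem_sup_left h1)
        (Submodule.mem_sup_right (Submodule.smul_mem _ _ (Submodule.mem_span_singleton_self _)))
    by_contra hlt
    push_neg at hlt
    have h2 := Submodule.rank_mono hsub
    have h3 := Submodule.rank_add_le_rank_add_rank (E ⊓ LinearMap.ker φ.toLinearMap)
      (Submodule.span ℝ {e₀})
    have h4 : Module.rank ℝ (Submodule.span ℝ ({e₀} : Set V)) ≤ 1 := by
      simpa using rank_span_le (R := ℝ) ({e₀} : Set V)
    have h5 : Module.rank ℝ (E ⊓ LinearMap.ker φ.toLinearMap : Submodule ℝ V)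
        + Module.rank ℝ (Submodule.span ℝ ({e₀} : Set V)) < Cardinal.continuum :=
      Cardinal.add_lt_of_lt Cardinal.aleph0_le_continuum hlt
        (lt_of_le_of_lt h4 (Cardinal.one_lt_aleph0.trans_le Cardinal.aleph0_le_continuum))
    exact absurd hE (not_le.mpr (lt_of_le_of_lt (h2.trans h3) h5))

lemma aux_escape (W E U : Submodule ℝ V)
    (hE : Cardinal.continuum ≤ Module.rank ℝ E)
    (hEW : ∀ v, v ∈ E → v ∈ W → v = 0) [FiniteDimensional ℝ U] :
    ∃ f, f ∈ E ∧ f ∉ W ⊔ U := by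
  by_contra h
  push_neg at h
  have hle : E ≤ W ⊔ U := fun v hv => h v hv
  have hinj : Function.Injective (W.mkQ.comp E.subtype) := by
    rw [← LinearMap.ker_eq_bot, LinearMap.ker_eq_bot']
    rintro ⟨v, hv⟩ hv0
    have : v ∈ W := by
      simpa [Submodule.Quotient.mk_eq_zero] using congrArg id hv0
    exact Subtype.ext (hEW v hv this)
  have hrank : Module.rank ℝ E
      = Module.rank ℝ (LinearMap.range (W.mkQ.comp E.subtype)) :=
    (LinearEquiv.ofInjective _ hinj).rank_eq
  have hsub2 : LinearMap.range (W.mkQ.comp E.subtype) ≤ U.map W.mkQ := by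
    rintro _ ⟨⟨v, hv⟩, rfl⟩
    obtain ⟨w, hw, u, hu, rfl⟩ := Submodule.mem_sup.mp (hle hv)
    refine ⟨u, hu, ?_⟩
    simp only [Submodule.mkQ_apply, LinearMap.comp_apply, Submodule.subtype_apply,
      Submodule.Quotient.mk_add, Submodule.Quotient.mk_eq_zero, right_eq_add,
      eq_comm]
    exact ((Submodule.Quotient.mk_eq_zero W).mpr hw).symm
  have hfin : Module.rank ℝ (U.map W.mkQ) < Cardinal.aleph0 :=
    Module.rank_lt_aleph0 ℝ _
  exact absurd ((hE.trans_eq hrank).trans (Submodule.rank_mono hsub2))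
    (not_le.mpr (lt_of_lt_of_le hfin Cardinal.aleph0_le_continuum))

end Aux

set_option maxHeartbeats 1000000 in
/-- if `dim V ≥ 𝔠`, `W` is a closed subspace containing a regular basic
sequence, and `V \ W` is `𝔠`-lineable, then `V \ W` is pointwise `𝔠`-spaceable. -/
theorem stmt10 (V : Type*) [NormedAddCommGroup V] [NormedSpace ℝ V] [CompleteSpace V]
    (hdim : Cardinal.continuum ≤ Module.rank ℝ V)
    (W : Submodule ℝ V) (hWclosed : IsClosed (W : Set V))
    (hbasic : ∃ y : ℕ → V, (∀ k, y k ∈ W) ∧ IsBasicSeq y ∧ ∃ L > 0, ∀ k, L ≤ ‖y k‖)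
    (hlin : ∃ E : Submodule ℝ V, Module.rank ℝ E = Cardinal.continuum ∧
      (E : Set V) ⊆ (W : Set V)ᶜ ∪ {0})
    (x : V) (hx : x ∉ W) :
    ∃ F : Submodule ℝ V, IsClosed (F : Set V) ∧ Module.rank ℝ F = Cardinal.continuum ∧
      x ∈ F ∧ F ⊓ W = ⊥ := by
  classical
  obtain ⟨y, hyW, ⟨hy0, C, hC⟩, L, hL, hLy⟩ := hbasic
  obtain ⟨E, hErank, hEsub⟩ := hlin
  have hEW : ∀ v, v ∈ E → v ∈ W → v = 0 := by
    intro v hvE hvW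
    rcases hEsub hvE with h | h
    · exact absurd hvW h
    · exact h
  set C₁ : ℝ := max C 1 with hC₁def
  have hC₁1 : (1:ℝ) ≤ C₁ := le_max_right _ _
  have hC₁0 : (0:ℝ) < C₁ := lt_of_lt_of_le one_pos hC₁1
  have hC₁ : ∀ s r : ℕ, s ≤ r → ∀ lam : ℕ → ℝ,
      ‖∑ k ∈ Finset.range s, lam k • y k‖ ≤ C₁ * ‖∑ k ∈ Finset.range r, lam k • y k‖ :=
    fun s r hsr lam => (hC s r hsr lam).trans
      (mul_le_mul_of_nonneg_right (le_max_left _ _) (norm_nonneg _))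
  obtain ⟨g, hgx, hgW⟩ := aux_hb W hWclosed hx
  -- construction of a biorthogonal sequence
  have hext : ∀ s : Finset (V × (V →L[ℝ] ℝ)),
      (∀ p ∈ s, p.2 p.1 = 1 ∧ (∀ w ∈ W, p.2 w = 0) ∧ g p.1 = 0) →
      ∃ q : V × (V →L[ℝ] ℝ), (q.2 q.1 = 1 ∧ (∀ w ∈ W, q.2 w = 0) ∧ g q.1 = 0) ∧
        ∀ p ∈ s, p.2 q.1 = 0 ∧ q.2 p.1 = 0 := by
    intro s _
    -- the subspace of E on which g and all functionals of s vanish still has rank ≥ 𝔠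
    have hrkE' : ∀ t : Finset (V × (V →L[ℝ] ℝ)), Cardinal.continuum ≤
        Module.rank ℝ ((E ⊓ LinearMap.ker g.toLinearMap) ⊓ t.inf (fun p => LinearMap.ker p.2.toLinearMap)
          : Submodule ℝ V) := by
      intro t
      induction t using Finset.induction_on with
      | empty =>
          rw [Finset.inf_empty, inf_top_eq]
          exact aux_rank_inf_ker E hErank.ge g
      | insert _ _ hnot ih =>
          rename_i a t
          have : (E ⊓ LinearMap.ker g.toLinearMap) ⊓ (insert a t).inf (fun p => LinearMap.ker p.2.toLinearMap)
              = ((E ⊓ LinearMap.ker g.toLinearMap) ⊓ t.inf (fun p => LinearMap.ker p.2.toLinearMap))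
                ⊓ LinearMap.ker a.2.toLinearMap := by
            rw [Finset.inf_insert]
            ext v
            simp only [Submodule.mem_inf]
            tauto
          rw [this]
          exact aux_rank_inf_ker _ ih a.2
    set E' : Submodule ℝ V :=
      (E ⊓ LinearMap.ker g.toLinearMap) ⊓ s.inf (fun p => LinearMap.ker p.2.toLinearMap) with hE'def
    have hE'W : ∀ v, v ∈ E' → v ∈ W → v = 0 := fun v hv hvW => hEW v hv.1.1 hvW
    set U : Submodule ℝ V := Submodule.span ℝ (insert x ↑(s.image Prod.fst)) with hUdef
    haveI : FiniteDimensional ℝ U :=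
      FiniteDimensional.span_of_finite ℝ ((s.image Prod.fst).finite_toSet.insert x)
    obtain ⟨b, hbE', hbWU⟩ := aux_escape W E' U (hrkE' s) hE'W
    obtain ⟨χ, hχb, hχWU⟩ := aux_hb (W ⊔ U) (aux_closed_sup W U hWclosed) hbWU
    refine ⟨(b, χ), ⟨hχb, fun w hw => hχWU w (le_sup_left (a := W) (b := U) hw),
      hbE'.1.2⟩, fun p hp => ⟨?_, ?_⟩⟩
    · exact (Finset.inf_le hp : s.inf (fun p => LinearMap.ker p.2.toLinearMap) ≤ _) hbE'.2
    · refine hχWU _ (le_sup_right (a := W) (b := U) ?_)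
      exact Submodule.subset_span (Set.mem_insert_of_mem _ (by
        simpa using Finset.mem_image_of_mem Prod.fst hp))
  obtain ⟨pr, hP, hr⟩ := exists_seq_of_forall_finset_exists
    (fun p : V × (V →L[ℝ] ℝ) => p.2 p.1 = 1 ∧ (∀ w ∈ W, p.2 w = 0) ∧ g p.1 = 0)
    (fun p q => p.2 q.1 = 0 ∧ q.2 p.1 = 0) hext
  set e' : ℕ → V := fun n => (pr n).1 with he'def
  set ψ' : ℕ → (V →L[ℝ] ℝ) := fun n => (pr n).2 with hψ'def
  have hψ'1 : ∀ n, ψ' n (e' n) = 1 := fun n => (hP n).1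
  have hψ'W : ∀ n, ∀ w ∈ W, ψ' n w = 0 := fun n => (hP n).2.1
  have hge' : ∀ n, g (e' n) = 0 := fun n => (hP n).2.2
  have hψ'0 : ∀ m n, m ≠ n → ψ' m (e' n) = 0 := by
    intro m n hmn
    rcases lt_or_gt_of_ne hmn with h | h
    · exact (hr m n h).1
    · exact (hr n m h).2
  have he'0 : ∀ n, e' n ≠ 0 := by
    intro n h
    have := hψ'1 n
    rw [h, map_zero] at this
    exact one_ne_zero this.symm
  set ε : ℕ → ℝ := fun n => (L / (8 * C₁)) * (1/2)^n with hεdef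
  have hεpos : ∀ n, 0 < ε n := fun n => by simp only [hεdef]; positivity
  set e : ℕ → V := fun n => (ε n / ‖e' n‖) • e' n with hedef
  set ψ : ℕ → (V →L[ℝ] ℝ) := fun n => (‖e' n‖ / ε n) • ψ' n with hψdef
  have hen : ∀ n, ‖e n‖ = ε n := by
    intro n
    rw [hedef]
    simp only [norm_smul, Real.norm_eq_abs]
    rw [abs_of_pos (div_pos (hεpos n) (norm_pos_iff.mpr (he'0 n))),
      div_mul_cancel₀ _ (norm_ne_zero_iff.mpr (he'0 n))]
  have hψW : ∀ n, ∀ w ∈ W, ψ n w = 0 := by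
    intro n w hw
    simp [hψdef, hψ'W n w hw]
  have hge : ∀ n, g (e n) = 0 := by
    intro n
    simp [hedef, hge' n]
  have hψe : ∀ n m, ψ n (e m) = if n = m then 1 else 0 := by
    intro n m
    simp only [hψdef, hedef, ContinuousLinearMap.smul_apply, map_smul, smul_eq_mul]
    by_cases h : n = m
    · subst h
      rw [hψ'1 n, if_pos rfl, mul_one]
      have h1 := (hεpos n).ne'
      have h2 := norm_ne_zero_iff.mpr (he'0 n)
      field_simp
    · rw [hψ'0 n m h, if_neg h]
      ring
  set z : ℕ → V := fun k => e k + y k with hzdef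
  have hψz : ∀ n m, ψ n (z m) = if n = m then 1 else 0 := by
    intro n m
    rw [hzdef]
    simp only [map_add, hψW n _ (hyW m), add_zero]
    exact hψe n m
  have hgz : ∀ k, g (z k) = 0 := by
    intro k
    rw [hzdef]
    simp [map_add, hge k, hgW _ (hyW k)]
  have hz0 : ∀ k, z k ≠ 0 := by
    intro k h
    have := hψz k k
    rw [h, map_zero, if_pos rfl] at this
    exact one_ne_zero this.symm
  -- summability of the ε
  have hεsum : ∀ s : ℕ, ∑ k ∈ Finset.range s, ε k ≤ L/(4*C₁) := by
    intro s
    have h1 : ∑ k ∈ Finset.range s, ε k = (L / (8*C₁)) * ∑ k ∈ Finset.range s, (1/2:ℝ)^k := by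
      rw [Finset.mul_sum]
    rw [h1]
    calc (L / (8*C₁)) * ∑ k ∈ Finset.range s, (1/2:ℝ)^k
        ≤ (L / (8*C₁)) * 2 :=
          mul_le_mul_of_nonneg_left (sum_geometric_two_le s) (by positivity)
      _ = L/(4*C₁) := by ring
  -- coefficient bound for the basic sequence y
  have hcoef : ∀ (lam : ℕ → ℝ) (R k : ℕ), k < R →
      |lam k| ≤ 2*C₁/L * ‖∑ j ∈ Finset.range R, lam j • y j‖ := by
    intro lam R k hk
    set S := ‖∑ j ∈ Finset.range R, lam j • y j‖ with hSdef
    have h1 : ‖∑ j ∈ Finset.range (k+1), lam j • y j‖ ≤ C₁ * S := hC₁ _ _ hk lam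
    have h2 : ‖∑ j ∈ Finset.range k, lam j • y j‖ ≤ C₁ * S := hC₁ _ _ (le_of_lt hk) lam
    have h3 : lam k • y k = ∑ j ∈ Finset.range (k+1), lam j • y j
        - ∑ j ∈ Finset.range k, lam j • y j := by
      rw [Finset.sum_range_succ]; abel
    have h4 : ‖lam k • y k‖ ≤ 2*C₁*S := by
      rw [h3]
      calc ‖_ - _‖ ≤ ‖∑ j ∈ Finset.range (k+1), lam j • y j‖
          + ‖∑ j ∈ Finset.range k, lam j • y j‖ := norm_sub_le _ _
        _ ≤ 2*C₁*S := by linarith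
    have h5 : |lam k| * L ≤ ‖lam k • y k‖ := by
      rw [norm_smul, Real.norm_eq_abs]
      exact mul_le_mul_of_nonneg_left (hLy k) (abs_nonneg _)
    rw [div_mul_eq_mul_div, le_div_iff₀ hL]
    linarith
  -- the perturbed sums are small
  have hD : ∀ (lam : ℕ → ℝ) (s R : ℕ), s ≤ R →
      ‖∑ k ∈ Finset.range s, lam k • e k‖
        ≤ (1/2) * ‖∑ j ∈ Finset.range R, lam j • y j‖ := by
    intro lam s R hsR
    set S := ‖∑ j ∈ Finset.range R, lam j • y j‖ with hSdef
    have hS0 : 0 ≤ S := norm_nonneg _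
    calc ‖∑ k ∈ Finset.range s, lam k • e k‖
        ≤ ∑ k ∈ Finset.range s, ‖lam k • e k‖ := norm_sum_le _ _
      _ = ∑ k ∈ Finset.range s, |lam k| * ε k := by
          refine Finset.sum_congr rfl fun k _ => ?_
          rw [norm_smul, Real.norm_eq_abs, hen k]
      _ ≤ ∑ k ∈ Finset.range s, (2*C₁/L * S) * ε k := by
          refine Finset.sum_le_sum fun k hk => ?_
          exact mul_le_mul_of_nonneg_right
            (hcoef lam R k (lt_of_lt_of_le (Finset.mem_range.mp hk) hsR)) (hεpos k).le
      _ = (2*C₁/L * S) * ∑ k ∈ Finset.range s, ε k := by rw [← Finset.mul_sum]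
      _ ≤ (2*C₁/L * S) * (L/(4*C₁)) := by
          refine mul_le_mul_of_nonneg_left (hεsum s) (by positivity)
      _ = (1/2) * S := by field_simp; ring
  -- the z sequence satisfies a basic-sequence inequality
  have hsplit : ∀ (lam : ℕ → ℝ) (Q : ℕ), ∑ k ∈ Finset.range Q, lam k • z k
      = ∑ k ∈ Finset.range Q, lam k • y k + ∑ k ∈ Finset.range Q, lam k • e k := by
    intro lam Q
    rw [← Finset.sum_add_distrib]
    refine Finset.sum_congr rfl fun k _ => ?_
    rw [hzdef]
    simp only [smul_add]
    abel
  have hzb : ∀ (lam : ℕ → ℝ) (s R : ℕ), s ≤ R →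
      ‖∑ k ∈ Finset.range s, lam k • z k‖
        ≤ (2*C₁+1) * ‖∑ k ∈ Finset.range R, lam k • z k‖ := by
    intro lam s R hsR
    have hDR := hD lam R R le_rfl
    have hDs := hD lam s R hsR
    have hy4 := hC₁ s R hsR lam
    have hA : ‖∑ j ∈ Finset.range R, lam j • y j‖
        ≤ 2 * ‖∑ k ∈ Finset.range R, lam k • z k‖ := by
      have h2 : ‖∑ j ∈ Finset.range R, lam j • y j‖
          ≤ ‖∑ k ∈ Finset.range R, lam k • z k‖ + ‖∑ k ∈ Finset.range R, lam k • e k‖ := by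
        have : ∑ j ∈ Finset.range R, lam j • y j
            = ∑ k ∈ Finset.range R, lam k • z k - ∑ k ∈ Finset.range R, lam k • e k := by
          rw [hsplit lam R]; abel
        rw [this]
        exact norm_sub_le _ _
      linarith
    have h3 : ‖∑ k ∈ Finset.range s, lam k • z k‖
        ≤ ‖∑ k ∈ Finset.range s, lam k • y k‖ + ‖∑ k ∈ Finset.range s, lam k • e k‖ := by
      rw [hsplit lam s]
      exact norm_add_le _ _
    have h6 : (C₁ + 1/2) * ‖∑ j ∈ Finset.range R, lam j • y j‖
        ≤ (C₁ + 1/2) * (2 * ‖∑ k ∈ Finset.range R, lam k • z k‖) :=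
      mul_le_mul_of_nonneg_left hA (by positivity)
    linarith
  -- the closed subspace generated by z
  set G : Submodule ℝ V := (Submodule.span ℝ (Set.range z)).topologicalClosure with hGdef
  have hGclosed : IsClosed (G : Set V) := Submodule.isClosed_topologicalClosure _
  have hGkg : ∀ v ∈ G, g v = 0 := by
    have : G ≤ LinearMap.ker g.toLinearMap := by
      refine Submodule.topologicalClosure_minimal _ ?_ (ContinuousLinearMap.isClosed_ker g)
      rw [Submodule.span_le]
      rintro _ ⟨k, rfl⟩
      exact hgz k
    exact fun v hv => this hv
  -- value of ψ j on finite combinations of z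
  have hφsum : ∀ (c : ℕ → ℝ) (Q : ℕ) (j : ℕ),
      ψ j (∑ k ∈ Finset.range Q, c k • z k) = if j < Q then c j else 0 := by
    intro c Q j
    rw [map_sum]
    have : ∀ k ∈ Finset.range Q, ψ j (c k • z k) = if j = k then c k else 0 := by
      intro k _
      rw [map_smul, smul_eq_mul, hψz j k]
      by_cases h : j = k <;> simp [h]
    rw [Finset.sum_congr rfl this, Finset.sum_ite_eq (Finset.range Q) j c]
    simp [Finset.mem_range]
  -- main claim : G ∩ W = 0
  have hGW : ∀ u, u ∈ G → u ∈ W → u = 0 := by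
    intro u huG huW
    have huG' : u ∈ closure (Submodule.span ℝ (Set.range z) : Set V) := by
      rw [← Submodule.topologicalClosure_coe]; exact huG
    obtain ⟨useq, huseq, hulim⟩ := mem_closure_iff_seq_limit.mp huG'
    choose c hc using fun n => Finsupp.mem_span_range_iff_exists_finsupp.mp (huseq n)
    set Rn : ℕ → ℕ := fun n => (c n).support.sup id + 1 with hRndef
    have husum : ∀ n Q, Rn n ≤ Q →
        ∑ k ∈ Finset.range Q, (c n) k • z k = useq n := by
      intro n Q hQ
      rw [← hc n]
      rw [Finsupp.sum_of_support_subset (c n) ?_ (fun i a => a • z i) (fun i _ => by simp)]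
      intro k hk
      rw [Finset.mem_range]
      have h1 : k ≤ (c n).support.sup id := Finset.le_sup (f := id) hk
      have h2 : (c n).support.sup id + 1 ≤ Q := by rw [hRndef] at hQ; exact hQ
      omega
    have hψu : ∀ n j, ψ j (useq n) = (c n) j := by
      intro n j
      have hQ : Rn n ≤ max (Rn n) (j+1) := le_max_left _ _
      rw [← husum n (max (Rn n) (j+1)) hQ, hφsum]
      rw [if_pos (lt_of_lt_of_le (Nat.lt_succ_self j) (le_max_right _ _))]
    have hkey : ∀ n m, ‖useq n - ∑ k ∈ Finset.range (Rn n), ψ k (useq m) • z k‖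
        ≤ (2*C₁+1) * ‖useq n - useq m‖ := by
      intro n m
      set Q := max (Rn n) (Rn m) with hQdef
      have h1 : ∑ k ∈ Finset.range Q, (fun k => (c n) k - (c m) k) k • z k
          = useq n - useq m := by
        simp only [sub_smul, Finset.sum_sub_distrib]
        rw [husum n Q (le_max_left _ _), husum m Q (le_max_right _ _)]
      have h2 : ∑ k ∈ Finset.range (Rn n), (fun k => (c n) k - (c m) k) k • z k
          = useq n - ∑ k ∈ Finset.range (Rn n), ψ k (useq m) • z k := by
        simp only [sub_smul, Finset.sum_sub_distrib]
        rw [husum n (Rn n) le_rfl]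
        congr 1
        refine Finset.sum_congr rfl fun k _ => ?_
        rw [hψu m k]
      have := hzb (fun k => (c n) k - (c m) k) (Rn n) Q (le_max_left _ _)
      rw [h1, h2] at this
      exact this
    have hn : ∀ n, ‖useq n‖ ≤ (2*C₁+1) * ‖useq n - u‖ := by
      intro n
      have hwlim : Filter.Tendsto (fun m => ∑ k ∈ Finset.range (Rn n), ψ k (useq m) • z k)
          Filter.atTop (nhds 0) := by
        have h0 : (0 : V) = ∑ k ∈ Finset.range (Rn n), (0:ℝ) • z k := by simp
        rw [h0]
        refine tendsto_finset_sum _ fun k _ => ?_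
        have hc1 : Filter.Tendsto (fun m => ψ k (useq m)) Filter.atTop (nhds (0:ℝ)) := by
          have h2 := ((ψ k).continuous.tendsto u).comp hulim
          rwa [hψW k u huW] at h2
        simpa using hc1.smul_const (z k)
      have hlhs : Filter.Tendsto
          (fun m => ‖useq n - ∑ k ∈ Finset.range (Rn n), ψ k (useq m) • z k‖)
          Filter.atTop (nhds ‖useq n - 0‖) := (tendsto_const_nhds.sub hwlim).norm
      have hrhs : Filter.Tendsto (fun m => (2*C₁+1) * ‖useq n - useq m‖)
          Filter.atTop (nhds ((2*C₁+1) * ‖useq n - u‖)) :=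
        ((tendsto_const_nhds.sub hulim).norm).const_mul _
      have hle := le_of_tendsto_of_tendsto' hlhs hrhs (fun m => hkey n m)
      simpa using hle
    have h1 : Filter.Tendsto (fun n => ‖useq n‖) Filter.atTop (nhds ‖u‖) := hulim.norm
    have h2 : Filter.Tendsto (fun n => (2*C₁+1) * ‖useq n - u‖) Filter.atTop (nhds 0) := by
      have := ((hulim.sub (tendsto_const_nhds (x := u))).norm).const_mul (2*C₁+1)
      simpa using this
    have := le_of_tendsto_of_tendsto' h1 h2 hn
    exact norm_le_zero_iff.mp this
  -- the family v t
  have hsummable : ∀ t : ℝ, t ∈ Set.Ioo (0:ℝ) 1 →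
      Summable (fun k => ((t/2)^k * ‖z k‖⁻¹) • z k) := by
    intro t ht
    have h0t : (0:ℝ) ≤ t/2 := by linarith [ht.1]
    refine Summable.of_norm_bounded (g := fun k => (t/2)^k) ?_ ?_
    · exact summable_geometric_of_lt_one h0t (by linarith [ht.2])
    · intro k
      rw [norm_smul, Real.norm_eq_abs, abs_mul, abs_pow, abs_of_nonneg h0t,
        abs_of_nonneg (inv_nonneg.mpr (norm_nonneg _)), mul_assoc,
        inv_mul_cancel₀ (norm_ne_zero_iff.mpr (hz0 k)), mul_one]
  set v : ℝ → V := fun t => ∑' k, ((t/2)^k * ‖z k‖⁻¹) • z k with hvdef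
  have hvG : ∀ t : ℝ, t ∈ Set.Ioo (0:ℝ) 1 → v t ∈ G := by
    intro t ht
    have hhs := (hsummable t ht).hasSum
    refine hGclosed.mem_of_tendsto hhs.tendsto_sum_nat
      (Filter.Eventually.of_forall fun n => ?_)
    exact Submodule.sum_mem _ fun k _ => Submodule.smul_mem _ _
      (Submodule.le_topologicalClosure _ (Submodule.subset_span (Set.mem_range_self k)))
  have hψv : ∀ (j : ℕ) (t : ℝ), t ∈ Set.Ioo (0:ℝ) 1 →
      ψ j (v t) = (t/2)^j * ‖z j‖⁻¹ := by
    intro j t ht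
    rw [hvdef]
    rw [ContinuousLinearMap.map_tsum (ψ j) (hsummable t ht)]
    rw [tsum_eq_single j ?_]
    · rw [map_smul, smul_eq_mul, hψz j j, if_pos rfl, mul_one]
    · intro k hk
      rw [map_smul, smul_eq_mul, hψz j k, if_neg (fun h => hk h.symm), mul_zero]
  -- linear independence of the v t
  have hindep : LinearIndependent ℝ (fun t : ↥(Set.Ioo (0:ℝ) 1) => v (t:ℝ)) := by
    rw [linearIndependent_iff']
    intro s gc hsum i hi
    have hkey : ∀ j : ℕ, ∑ t ∈ s, gc t * (((t:ℝ))/2)^j = 0 := by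
      intro j
      have h1 : ψ j (∑ t ∈ s, gc t • v (t:ℝ)) = 0 := by rw [hsum, map_zero]
      rw [map_sum] at h1
      have h2 : ∀ t ∈ s, ψ j (gc t • v (t:ℝ)) = (gc t * ((t:ℝ)/2)^j) * ‖z j‖⁻¹ := by
        intro t _
        rw [map_smul, smul_eq_mul, hψv j (t:ℝ) t.2, mul_assoc]
      rw [Finset.sum_congr rfl h2, ← Finset.sum_mul] at h1
      rcases mul_eq_zero.mp h1 with h | h
      · exact h
      · exact absurd h (inv_ne_zero (norm_ne_zero_iff.mpr (hz0 j)))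
    -- Vandermonde argument
    set n := s.card with hndef
    set eqv := s.equivFin with heqvdef
    set μ : Fin n → ℝ := fun p => ((eqv.symm p : ↥(Set.Ioo (0:ℝ) 1)) : ℝ)/2 with hμdef
    have hμinj : Function.Injective μ := by
      intro p q h
      have : ((eqv.symm p : ↥(Set.Ioo (0:ℝ) 1)) : ℝ)
          = ((eqv.symm q : ↥(Set.Ioo (0:ℝ) 1)) : ℝ) := by
        have := h
        rw [hμdef] at this
        simpa [div_eq_div_iff] using this
      exact eqv.symm.injective (Subtype.ext (Subtype.ext this))
    have hvec : (Matrix.vandermonde μ).transpose.mulVec (fun p => gc (eqv.symm p)) = 0 := by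
      funext j
      have h1 := hkey j
      rw [← Finset.sum_attach s (fun t => gc t * (((t:ℝ))/2)^(j:ℕ)),
        ← Finset.univ_eq_attach] at h1
      rw [← Equiv.sum_comp eqv.symm
        (fun t : ↥s => gc t * (((t:ℝ))/2)^(j:ℕ))] at h1
      simpa [Matrix.mulVec, Matrix.vandermonde, dotProduct, hμdef, mul_comm] using h1
    have hdet : ((Matrix.vandermonde μ).transpose).det ≠ 0 := by
      rw [Matrix.det_transpose]
      exact Matrix.det_vandermonde_ne_zero_iff.mpr hμinj
    have hzero := Matrix.eq_zero_of_mulVec_eq_zero hdet hvec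
    have h0 := congrFun hzero (eqv ⟨i, hi⟩)
    rw [Equiv.symm_apply_apply] at h0
    exact h0
  -- rank of G is exactly continuum
  have hrankG_lower : Cardinal.continuum ≤ Module.rank ℝ G := by
    have hind2 : LinearIndependent ℝ
        (fun t : ↥(Set.Ioo (0:ℝ) 1) => (⟨v (t:ℝ), hvG _ t.2⟩ : ↥G)) := by
      have hcomp : (G.subtype ∘ fun t : ↥(Set.Ioo (0:ℝ) 1) =>
          (⟨v (t:ℝ), hvG _ t.2⟩ : ↥G)) = fun t : ↥(Set.Ioo (0:ℝ) 1) => v (t:ℝ) := rfl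
      exact LinearIndependent.of_comp G.subtype (by rw [hcomp]; exact hindep)
    have hle := hind2.cardinal_lift_le_rank
    rw [Cardinal.mk_Ioo_real one_pos, Cardinal.lift_continuum, Cardinal.lift_uzero] at hle
    exact hle
  -- cardinality of the span of z
  have hspan_card : #↥(Submodule.span ℝ (Set.range z)) ≤ Cardinal.continuum := by
    have hsurj : Function.Surjective
        (fun cf : ℕ →₀ ℝ => (⟨cf.sum fun i a => a • z i,
          Submodule.finsuppSum_mem _ _ _ _ fun i _ => Submodule.smul_mem _ _
            (Submodule.subset_span (Set.mem_range_self i))⟩ :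
          ↥(Submodule.span ℝ (Set.range z)))) := by
      rintro ⟨u, hu⟩
      obtain ⟨cf, hcf⟩ := Finsupp.mem_span_range_iff_exists_finsupp.mp hu
      exact ⟨cf, Subtype.ext hcf⟩
    have hemb : Nonempty (↥(Submodule.span ℝ (Set.range z)) ↪ (ℕ →₀ ℝ)) :=
      ⟨Function.Embedding.ofSurjective _ hsurj⟩
    have h2 : #(ℕ →₀ ℝ) ≤ Cardinal.continuum := by
      have h3 := Cardinal.mk_le_of_injective
        (DFunLike.coe_injective : Function.Injective (fun cf : ℕ →₀ ℝ => (cf : ℕ → ℝ)))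
      have h4 : #(ℕ → ℝ) = Cardinal.continuum := by
        rw [← Cardinal.power_def ℝ ℕ, Cardinal.mk_real, Cardinal.mk_nat,
          Cardinal.continuum_power_aleph0]
      exact h3.trans_eq h4
    have h5 := Cardinal.lift_mk_le'.mpr hemb
    rw [Cardinal.lift_uzero] at h5
    calc #↥(Submodule.span ℝ (Set.range z)) ≤ Cardinal.lift #(ℕ →₀ ℝ) := h5
      _ ≤ Cardinal.lift Cardinal.continuum := Cardinal.lift_le.mpr h2
      _ = Cardinal.continuum := Cardinal.lift_continuum
  -- cardinality (and rank) of G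
  have hG_card : #↥G ≤ Cardinal.continuum := by
    have happ : ∀ u : ↥G, ∀ n : ℕ, ∃ d : ↥(Submodule.span ℝ (Set.range z)),
        dist (u : V) (d : V) < 1/(n+1) := by
      rintro ⟨u, hu⟩ n
      have hu' : u ∈ closure (Submodule.span ℝ (Set.range z) : Set V) := by
        rw [← Submodule.topologicalClosure_coe]; exact hu
      obtain ⟨d, hd, hdist⟩ := Metric.mem_closure_iff.mp hu' (1/(n+1)) (by positivity)
      exact ⟨⟨d, hd⟩, hdist⟩
    choose fapp hfapp using happ
    have hinj : Function.Injective fapp := by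
      intro u u' h
      have hdist : ∀ n : ℕ, dist (u : V) (u' : V) < 2/(n+1) := by
        intro n
        have h1 := hfapp u n
        have h2 := hfapp u' n
        rw [h] at h1
        have h2' : dist (fapp u' n : V) (u' : V) < 1/(n+1) := by
          rw [dist_comm]; exact h2
        calc dist (u:V) (u':V)
            ≤ dist (u:V) (fapp u' n : V) + dist (fapp u' n : V) (u':V) :=
              dist_triangle _ _ _
          _ < 1/(n+1) + 1/(n+1) := add_lt_add h1 h2'
          _ = 2/(n+1) := by ring
      have hlim : Filter.Tendsto (fun n : ℕ => 2/((n:ℝ)+1)) Filter.atTop (nhds 0) := by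
        have := tendsto_one_div_add_atTop_nhds_zero_nat.const_mul (2:ℝ)
        simpa [mul_one_div, div_eq_mul_inv] using this
      have hzero : dist (u:V) (u':V) ≤ 0 :=
        ge_of_tendsto hlim (Filter.Eventually.of_forall fun n => (hdist n).le)
      exact Subtype.ext (dist_le_zero.mp hzero)
    have h1 : #↥G ≤ #(ℕ → ↥(Submodule.span ℝ (Set.range z))) :=
      Cardinal.mk_le_of_injective hinj
    have h2 : #(ℕ → ↥(Submodule.span ℝ (Set.range z)))
        = #↥(Submodule.span ℝ (Set.range z)) ^ Cardinal.aleph0 := by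
      rw [Cardinal.mk_arrow, Cardinal.lift_uzero, Cardinal.mk_nat, Cardinal.lift_aleph0]
    calc #↥G ≤ #↥(Submodule.span ℝ (Set.range z)) ^ Cardinal.aleph0 := h1.trans_eq h2
      _ ≤ Cardinal.continuum ^ Cardinal.aleph0 :=
          Cardinal.power_le_power_right hspan_card
      _ = Cardinal.continuum := Cardinal.continuum_power_aleph0
  have hrankG_upper : Module.rank ℝ G ≤ Cardinal.continuum :=
    (rank_le_card ℝ ↥G).trans hG_card
  -- the final subspace
  haveI : FiniteDimensional ℝ (Submodule.span ℝ ({x} : Set V)) :=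
    FiniteDimensional.span_of_finite ℝ (Set.finite_singleton x)
  refine ⟨Submodule.span ℝ ({x} : Set V) ⊔ G, ?_, ?_, ?_, ?_⟩
  · have heq : Submodule.span ℝ ({x} : Set V) ⊔ G = G ⊔ Submodule.span ℝ ({x} : Set V) :=
      sup_comm _ _
    rw [heq]
    exact aux_closed_sup G (Submodule.span ℝ ({x} : Set V)) hGclosed
  · refine le_antisymm ?_ ?_
    · calc Module.rank ℝ ↥(Submodule.span ℝ ({x} : Set V) ⊔ G)
          ≤ Module.rank ℝ ↥(Submodule.span ℝ ({x} : Set V)) + Module.rank ℝ ↥G :=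
            Submodule.rank_add_le_rank_add_rank _ _
        _ ≤ 1 + Cardinal.continuum := by
            refine add_le_add ?_ hrankG_upper
            simpa using rank_span_le (R := ℝ) ({x} : Set V)
        _ = Cardinal.continuum := by
            rw [Cardinal.add_eq_max' Cardinal.aleph0_le_continuum, max_eq_right]
            exact (Cardinal.one_lt_aleph0.trans_le Cardinal.aleph0_le_continuum).le
    · exact hrankG_lower.trans (Submodule.rank_mono le_sup_right)
  · exact Submodule.mem_sup_left (Submodule.mem_span_singleton_self x)
  · rw [eq_bot_iff]
    rintro vv ⟨hvF, hvW⟩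
    obtain ⟨s, hs, t, ht, rfl⟩ := Submodule.mem_sup.mp hvF
    obtain ⟨a, rfl⟩ := Submodule.mem_span_singleton.mp hs
    have hg0 : g (a • x + t) = 0 := hgW _ hvW
    rw [map_add, map_smul, hgx, smul_eq_mul, mul_one, hGkg t ht, add_zero] at hg0
    subst hg0
    rw [zero_smul, zero_add] at hvW ⊢
    exact (Submodule.mem_bot ℝ).mpr (hGW t ht hvW)
end
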